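/- Let L be a Lie algebra over ℂ, M a finite-dimensional complex L-module, and h an L-invariant Hermitian sesquilinear form on M that is nondegenerate on M. Suppose M is the internal direct sum of L-submodules V₁, …, V_l, each of which is irreducible and totally isotropic for h. Then for every index i there exists an index j ≠ i such that the restriction of h to the subspace V_i + V_j is nondegenerate. -/

import Mathlib

lemma aux_kernel_trivial
    {L : Type*} [LieRing L] [LieAlgebra ℂ L]
    {M : Type*} [AddCommGroup M] [Module ℂ M] [LieRingModule L M] [LieModule ℂ L M]
    (h : M →ₗ⋆[ℂ] M →ₗ[ℂ] ℂ)
    (hInv : ∀ (x : L) (v w : M), h ⁅x, v⁆ w + h v ⁅x, w⁆ = 0)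
    (A B : LieSubmodule ℂ L M)
    (hIrrA : ∀ W ≤ A, W = ⊥ ∨ W = A)
    (hex : ∃ a ∈ A, ∃ b ∈ B, h a b ≠ 0) :
    ∀ a ∈ A, (∀ b ∈ B, h a b = 0) → a = 0 := by
  set W : LieSubmodule ℂ L M :=
    { carrier := {a | a ∈ A ∧ ∀ b ∈ B, h a b = 0}
      add_mem' := by
        rintro x y ⟨hxA, hx⟩ ⟨hyA, hy⟩
        exact ⟨A.add_mem hxA hyA, fun b hb => by simp [hx b hb, hy b hb]⟩
      zero_mem' := ⟨A.zero_mem, fun b _ => by simp⟩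
      smul_mem' := by
        rintro c x ⟨hxA, hx⟩
        exact ⟨A.smul_mem c hxA, fun b hb => by
          simp [LinearMap.map_smulₛₗ, hx b hb]⟩
      lie_mem := by
        rintro x m ⟨hmA, hm⟩
        refine ⟨A.lie_mem hmA, fun b hb => ?_⟩
        have h1 := hInv x m b
        have h2 : h m ⁅x, b⁆ = 0 := hm _ (B.lie_mem hb)
        rw [h2, add_zero] at h1
        exact h1 } with hW
  have hWle : W ≤ A := fun x hx => hx.1
  rcases hIrrA W hWle with hbot | htop
  · intro a haA ha
    have : a ∈ W := ⟨haA, ha⟩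
    rw [hbot] at this
    simpa using this
  · exfalso
    obtain ⟨a, haA, b, hbB, hab⟩ := hex
    have : a ∈ W := htop ▸ haA
    exact hab (this.2 b hbB)

theorem exists_partner_of_isotropic_decomposition
    {L : Type*} [LieRing L] [LieAlgebra ℂ L]
    {M : Type*} [AddCommGroup M] [Module ℂ M] [LieRingModule L M] [LieModule ℂ L M]
    [FiniteDimensional ℂ M]
    (h : M →ₗ⋆[ℂ] M →ₗ[ℂ] ℂ)
    (hHerm : ∀ v w : M, h w v = (starRingEnd ℂ) (h v w))
    (hInv : ∀ (x : L) (v w : M), h ⁅x, v⁆ w + h v ⁅x, w⁆ = 0)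
    (hNondeg : ∀ v : M, (∀ w : M, h v w = 0) → v = 0)
    (l : ℕ) (V : Fin l → LieSubmodule ℂ L M)
    (hIndep : ∀ i, Disjoint (V i) (⨆ j ≠ i, V j))
    (hSup : (⨆ i, V i) = ⊤)
    (hIrr : ∀ i, V i ≠ ⊥ ∧ ∀ W ≤ V i, W = ⊥ ∨ W = V i)
    (hIso : ∀ i, ∀ v ∈ V i, ∀ w ∈ V i, h v w = 0) :
    ∀ i, ∃ j, j ≠ i ∧
      ∀ v ∈ V i ⊔ V j, (∀ w ∈ V i ⊔ V j, h v w = 0) → v = 0 := by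
  intro i
  obtain ⟨hne, hirr⟩ := hIrr i
  -- pick a nonzero element of V i
  obtain ⟨a, haV, ha0⟩ : ∃ a ∈ V i, a ≠ 0 := by
    by_contra hc
    push_neg at hc
    exact hne (LieSubmodule.eq_bot_iff _ |>.mpr hc)
  -- find j ≠ i with pairing nonzero
  obtain ⟨j, hji, b, hbV, hab⟩ : ∃ j, j ≠ i ∧ ∃ b ∈ V j, h a b ≠ 0 := by
    by_contra hc
    push_neg at hc
    refine ha0 (hNondeg a fun w => ?_)
    have hker : ∀ j, (V j : Submodule ℂ M) ≤ LinearMap.ker (h a) := by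
      intro j w hw
      by_cases hj : j = i
      · rw [hj] at hw; exact hIso i a haV w hw
      · exact hc j hj w hw
    have hw : w ∈ (⊤ : LieSubmodule ℂ L M) := trivial
    rw [← hSup] at hw
    have hw' : w ∈ (⨆ k, (V k : Submodule ℂ M)) := by
      rw [← LieSubmodule.iSup_toSubmodule]
      exact hw
    exact iSup_le hker hw'
  refine ⟨j, hji, ?_⟩
  have hAi : ∀ a' ∈ V i, (∀ b' ∈ V j, h a' b' = 0) → a' = 0 :=
    aux_kernel_trivial h hInv (V i) (V j) hirr ⟨a, haV, b, hbV, hab⟩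
  have hAj : ∀ b' ∈ V j, (∀ a' ∈ V i, h b' a' = 0) → b' = 0 :=
    aux_kernel_trivial h hInv (V j) (V i) (hIrr j).2
      ⟨b, hbV, a, haV, by rw [hHerm]; simpa using hab⟩
  intro v hv hvz
  obtain ⟨x, hx, y, hy, rfl⟩ := (LieSubmodule.mem_sup _ _ _).mp hv
  have hx0 : x = 0 := by
    refine hAi x hx fun w hw => ?_
    have := hvz w ((LieSubmodule.mem_sup _ _ _).mpr ⟨0, (V i).zero_mem, w, hw, by simp⟩)
    have hyw : h y w = 0 := hIso j y hy w hw
    simpa [hyw] using this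
  have hy0 : y = 0 := by
    refine hAj y hy fun w hw => ?_
    have := hvz w ((LieSubmodule.mem_sup _ _ _).mpr ⟨w, hw, 0, (V j).zero_mem, by simp⟩)
    have hxw : h x w = 0 := hIso i x hx w hw
    simpa [hxw] using this
  simp [hx0, hy0]
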